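/- Let 0 < α < 1 and let v be an absolutely continuous real-valued function on [0,T]. Then for all t ∈ (0,T], v(t) · ∂_t^α v(t) ≥ (1/2) ∂_t^α (v²)(t). -/

import Mathlib

open MeasureTheory Real Filter
open scoped ENNReal

noncomputable section

/-- Euclidean space `ℝ^N`. -/
abbrev Euc (N : ℕ) := EuclideanSpace ℝ (Fin N)

/-- Left Caputo fractional derivative of order `α`:
`∂_t^α f(t) = (1/Γ(1-α)) ∫_0^t f'(s) (t-s)^{-α} ds`. -/
def caputo (α : ℝ) (f : ℝ → ℝ) (t : ℝ) : ℝ :=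
  (1 / Real.Gamma (1 - α)) * ∫ s in Set.Ioo (0:ℝ) t, deriv f s * (t - s) ^ (-α)

/-- The closed cube `B(x,δ) = {y : |yᵢ - xᵢ| ≤ δ}`. -/
def Cube {N : ℕ} (x : Euc N) (δ : ℝ) : Set (Euc N) := {y | ∀ i, |y i - x i| ≤ δ}

/-- Divergence of a vector field on `ℝ^N`. -/
def diverg {N : ℕ} (F : Euc N → Euc N) (x : Euc N) : ℝ :=
  ∑ i, fderiv ℝ (fun y => F y i) x (EuclideanSpace.single i 1)

/-- The p-Laplacian `Δ_p u = div(|∇u|^{p-2} ∇u)`. -/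
def pLap {N : ℕ} (p : ℝ) (u : Euc N → ℝ) (x : Euc N) : ℝ :=
  diverg (fun y => ‖gradient u y‖ ^ (p - 2) • gradient u y) x

/-- The Laplacian as the sum of second partial derivatives. -/
def lap {N : ℕ} (f : Euc N → ℝ) (x : Euc N) : ℝ :=
  ∑ i, fderiv ℝ (fun y => fderiv ℝ f y (EuclideanSpace.single i 1)) x (EuclideanSpace.single i 1)

/-- Convolution `(J*u)(x) = ∫_{ℝ^N} J(x-y) u(y) dy`. -/
def conv {N : ℕ} (J u : Euc N → ℝ) (x : Euc N) : ℝ := ∫ y, J (x - y) * u y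

/-- Hypotheses on the competition kernel `J`:
`0 ≤ J ∈ L¹`, `∫ J = 1`, and `inf_{B(0,δ₀)} J > η`. -/
def KernelHyp {N : ℕ} (J : Euc N → ℝ) (δ₀ η : ℝ) : Prop :=
  (∀ y, 0 ≤ J y) ∧ Integrable J ∧ (∫ y, J y) = 1 ∧
    η < sInf (J '' {y | ∀ i, |y i| < δ₀})

/-- Absolute continuity of `f` on `[0,T]`, encoded via the fundamental theorem of calculus:
the a.e. derivative is integrable and `f t = f 0 + ∫_0^t f'`. -/
def AbsCont (f : ℝ → ℝ) (T : ℝ) : Prop :=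
  IntegrableOn (deriv f) (Set.Icc 0 T) ∧
    ∀ t ∈ Set.Icc (0:ℝ) T, f t = f 0 + ∫ s in (0:ℝ)..t, deriv f s

open Set in
lemma sq_trick {g : ℝ → ℝ} (hgm : Measurable g) {u t : ℝ} (hut : u < t)
    (hgi : IntegrableOn g (Set.Ioo u t)) :
    ∫ s in Set.Ioo u t, g s * (∫ x in Set.Ioo u s, g x)
      = (∫ s in Set.Ioo u t, g s) ^ 2 / 2 := by
  set ν : Measure ℝ := volume.restrict (Set.Ioo u t) with hν
  have hgν : Integrable g ν := hgi
  set Ψ : ℝ × ℝ → ℝ := fun p => if p.2 < p.1 then g p.1 * g p.2 else 0 with hΨ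
  have hΨm : Measurable Ψ := by
    apply Measurable.ite (measurableSet_lt measurable_snd measurable_fst)
    · exact (hgm.comp measurable_fst).mul (hgm.comp measurable_snd)
    · exact measurable_const
  have hΨflipm : Measurable (fun p : ℝ × ℝ => Ψ (p.2, p.1)) :=
    hΨm.comp (measurable_snd.prodMk measurable_fst)
  have hbound : Integrable (fun p : ℝ × ℝ => ‖g p.1‖ * ‖g p.2‖) (ν.prod ν) :=
    hgν.norm.mul_prod hgν.norm
  have habs : ∀ p : ℝ × ℝ, ‖Ψ p‖ ≤ ‖g p.1‖ * ‖g p.2‖ := by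
    intro p
    by_cases h : p.2 < p.1 <;> simp [hΨ, h, abs_mul, abs_nonneg, mul_nonneg]
  have hΨi : Integrable Ψ (ν.prod ν) :=
    hbound.mono' hΨm.aestronglyMeasurable (Filter.Eventually.of_forall habs)
  -- sections integrable
  have hsec1 : ∀ s : ℝ, Integrable (fun x => Ψ (s, x)) ν := by
    intro s
    have : (fun x => Ψ (s, x)) = fun x => g s * (Set.Iio s).indicator g x := by
      funext x
      simp [hΨ, Set.indicator_apply, Set.mem_Iio, mul_ite, mul_zero]
    rw [this]
    exact ((hgν.indicator measurableSet_Iio).const_mul _)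
  have hsec2 : ∀ s : ℝ, Integrable (fun x => Ψ (x, s)) ν := by
    intro s
    have : (fun x => Ψ (x, s)) = fun x => g s * (Set.Ioi s).indicator g x := by
      funext x
      simp only [hΨ, Set.indicator_apply, Set.mem_Ioi, mul_ite, mul_zero]
      by_cases h : s < x <;> simp [h, mul_comm]
    rw [this]
    exact ((hgν.indicator measurableSet_Ioi).const_mul _)
  have hνs : ∀ s : ℝ, ν {s} = 0 := by
    intro s
    rw [hν, Measure.restrict_apply (measurableSet_singleton s)]
    exact measure_mono_null Set.inter_subset_left (measure_singleton s)
  -- key pointwise identity after inner integration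
  have key : ∀ s : ℝ, (∫ x, Ψ (s, x) ∂ν) + (∫ x, Ψ (x, s) ∂ν) = g s * ∫ x, g x ∂ν := by
    intro s
    have hdiag : Integrable (fun x => ({s} : Set ℝ).indicator (fun x => g s * g x) x) ν :=
      (hgν.const_mul _).indicator (measurableSet_singleton s)
    have hdiag0 : (∫ x, ({s} : Set ℝ).indicator (fun x => g s * g x) x ∂ν) = 0 := by
      refine integral_eq_zero_of_ae ?_
      refine (Filter.eventuallyEq_iff_exists_mem).2 ⟨{s}ᶜ, ?_, ?_⟩
      · exact compl_mem_ae_iff.2 (hνs s)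
      · intro x hx
        simp [Set.indicator_apply, Set.mem_singleton_iff] at hx ⊢
        simp [hx]
    have hsum : (fun x => Ψ (s, x) + Ψ (x, s) + ({s} : Set ℝ).indicator (fun x => g s * g x) x)
        = fun x => g s * g x := by
      funext x
      rcases lt_trichotomy x s with h | h | h
      · simp [hΨ, h, not_lt.2 h.le, Set.indicator_apply, h.ne]
      · simp [hΨ, h, Set.indicator_apply]
      · simp [hΨ, h, not_lt.2 h.le, Set.indicator_apply, h.ne', mul_comm]
    calc (∫ x, Ψ (s, x) ∂ν) + (∫ x, Ψ (x, s) ∂ν)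
        = (∫ x, (Ψ (s, x) + Ψ (x, s)) ∂ν) + ∫ x, ({s} : Set ℝ).indicator (fun x => g s * g x) x ∂ν := by
          rw [integral_add (hsec1 s) (hsec2 s), hdiag0, add_zero]
      _ = ∫ x, (Ψ (s, x) + Ψ (x, s) + ({s} : Set ℝ).indicator (fun x => g s * g x) x) ∂ν := by
          exact (integral_add ((hsec1 s).add (hsec2 s)) hdiag).symm
      _ = ∫ x, g s * g x ∂ν := by rw [hsum]
      _ = g s * ∫ x, g x ∂ν := integral_const_mul _ _
  set C : ℝ := ∫ x, g x ∂ν with hC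
  set C' : ℝ := ∫ x, ‖g x‖ ∂ν with hC'
  have hI1m : StronglyMeasurable (fun s => ∫ x, Ψ (s, x) ∂ν) :=
    hΨm.stronglyMeasurable.integral_prod_right'
  have hI2m : StronglyMeasurable (fun s => ∫ x, Ψ (x, s) ∂ν) :=
    hΨflipm.stronglyMeasurable.integral_prod_right'
  have hI1b : ∀ s, ‖∫ x, Ψ (s, x) ∂ν‖ ≤ ‖g s‖ * C' := by
    intro s
    refine (norm_integral_le_integral_norm _).trans ?_
    have : ∀ x, ‖Ψ (s, x)‖ ≤ ‖g s‖ * ‖g x‖ := fun x => habs (s, x)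
    calc ∫ x, ‖Ψ (s, x)‖ ∂ν ≤ ∫ x, ‖g s‖ * ‖g x‖ ∂ν :=
          integral_mono (hsec1 s).norm (hgν.norm.const_mul _) this
      _ = ‖g s‖ * C' := integral_const_mul _ _
  have hI2b : ∀ s, ‖∫ x, Ψ (x, s) ∂ν‖ ≤ ‖g s‖ * C' := by
    intro s
    refine (norm_integral_le_integral_norm _).trans ?_
    have : ∀ x, ‖Ψ (x, s)‖ ≤ ‖g s‖ * ‖g x‖ := by
      intro x; rw [mul_comm]; exact habs (x, s)
    calc ∫ x, ‖Ψ (x, s)‖ ∂ν ≤ ∫ x, ‖g s‖ * ‖g x‖ ∂ν :=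
          integral_mono (hsec2 s).norm (hgν.norm.const_mul _) this
      _ = ‖g s‖ * C' := integral_const_mul _ _
  have hI1 : Integrable (fun s => ∫ x, Ψ (s, x) ∂ν) ν :=
    (hgν.norm.mul_const C').mono' hI1m.aestronglyMeasurable
      (Filter.Eventually.of_forall hI1b)
  have hI2 : Integrable (fun s => ∫ x, Ψ (x, s) ∂ν) ν :=
    (hgν.norm.mul_const C').mono' hI2m.aestronglyMeasurable
      (Filter.Eventually.of_forall hI2b)
  have hswap : (∫ s, (∫ x, Ψ (s, x) ∂ν) ∂ν) = ∫ s, (∫ x, Ψ (x, s) ∂ν) ∂ν := by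
    exact integral_integral_swap (f := fun s x => Ψ (s, x)) hΨi
  have hAB : (∫ s, (∫ x, Ψ (s, x) ∂ν) ∂ν) + (∫ s, (∫ x, Ψ (x, s) ∂ν) ∂ν) = C * C := by
    rw [← integral_add hI1 hI2]
    calc (∫ s, ((∫ x, Ψ (s, x) ∂ν) + ∫ x, Ψ (x, s) ∂ν) ∂ν)
        = ∫ s, g s * C ∂ν := by
          refine integral_congr_ae (Filter.Eventually.of_forall ?_)
          intro s; exact key s
      _ = C * C := integral_mul_const _ _
  have hA : (∫ s, (∫ x, Ψ (s, x) ∂ν) ∂ν) = C * C / 2 := by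
    rw [hswap] at hAB
    linarith [hAB]
  have hLHS : (∫ s in Set.Ioo u t, g s * (∫ x in Set.Ioo u s, g x))
      = ∫ s, (∫ x, Ψ (s, x) ∂ν) ∂ν := by
    refine setIntegral_congr_fun measurableSet_Ioo ?_
    intro s hs
    have e1 : (fun x => Ψ (s, x)) = fun x => g s * (Set.Iio s).indicator g x := by
      funext x
      simp [hΨ, Set.indicator_apply, Set.mem_Iio, mul_ite, mul_zero]
    have e2 : ν.restrict (Set.Iio s) = volume.restrict (Set.Ioo u s) := by
      rw [hν, Measure.restrict_restrict measurableSet_Iio]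
      congr 1
      ext x
      constructor
      · rintro ⟨hx1, hx2, hx3⟩; exact ⟨hx2, hx1⟩
      · rintro ⟨hx1, hx2⟩; exact ⟨hx2, hx1, hx2.trans hs.2⟩
    calc g s * (∫ x in Set.Ioo u s, g x)
        = g s * ∫ x, (Set.Iio s).indicator g x ∂ν := by
          rw [integral_indicator measurableSet_Iio, e2]
      _ = ∫ x, Ψ (s, x) ∂ν := by rw [e1, integral_const_mul]
  rw [hLHS, hA]
  rw [hC]
  ring

open Set in
lemma core_ineq (α t : ℝ) (hα : 0 < α) (ht : 0 < t) (φ H : ℝ → ℝ)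
    (hφm : Measurable φ)
    (hφi : IntegrableOn φ (Set.Ioo 0 t))
    (hφF : IntegrableOn (fun s => φ s * (t - s) ^ (-α)) (Set.Ioo 0 t))
    (hH : ∀ u ∈ Set.Ico (0:ℝ) t, (∫ s in Set.Ioo u t, φ s) = - H u)
    (hH0 : ∀ u ∈ Set.Ico (0:ℝ) t, 0 ≤ H u) :
    (∫ s in Set.Ioo 0 t, φ s * (t - s) ^ (-α)) ≤ 0 := by
  set ν : Measure ℝ := volume.restrict (Set.Ioo 0 t) with hν
  -- FTC computation for the kernel decomposition
  have hFTC : ∀ s ∈ Set.Ioo 0 t, (∫ x in Set.Ioo 0 s, α * (t - x) ^ (-α - 1))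
      = (t - s) ^ (-α) - t ^ (-α) := by
    intro s hs
    have hder : ∀ x ∈ Set.uIcc (0:ℝ) s,
        HasDerivAt (fun u => (t - u) ^ (-α)) (α * (t - x) ^ (-α - 1)) x := by
      intro x hx
      rw [Set.uIcc_of_le hs.1.le] at hx
      have htx : (0:ℝ) < t - x := by
        have : x < t := lt_of_le_of_lt hx.2 hs.2
        linarith
      have h1 : HasDerivAt (fun y : ℝ => y ^ (-α)) (-α * (t - x) ^ (-α - 1)) (t - x) :=
        Real.hasDerivAt_rpow_const (Or.inl htx.ne')
      have h2 : HasDerivAt (fun u : ℝ => t - u) (-1) x := by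
        simpa using (hasDerivAt_id x).const_sub t
      have := h1.comp x h2
      exact this.congr_deriv (by ring)
    have hcont : ContinuousOn (fun x => α * (t - x) ^ (-α - 1)) (Set.uIcc (0:ℝ) s) := by
      refine ContinuousOn.mul continuousOn_const ?_
      refine ContinuousOn.rpow_const ((continuousOn_const.sub continuousOn_id)) ?_
      intro x hx
      rw [Set.uIcc_of_le hs.1.le] at hx
      left
      have : x < t := lt_of_le_of_lt hx.2 hs.2
      intro h; rw [sub_eq_zero] at h; exact this.ne h.symm
    have := intervalIntegral.integral_eq_sub_of_hasDerivAt hder hcont.intervalIntegrable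
    rw [intervalIntegral.integral_of_le hs.1.le, integral_Ioc_eq_integral_Ioo] at this
    simpa using this
  have hFpos : ∀ x : ℝ, x < t → (0:ℝ) ≤ α * (t - x) ^ (-α - 1) := by
    intro x hx
    exact mul_nonneg hα.le (Real.rpow_nonneg (by linarith) _)
  -- the two-variable kernel
  set Ψ : ℝ × ℝ → ℝ := fun p => if p.2 < p.1 then φ p.1 * (α * (t - p.2) ^ (-α - 1)) else 0
    with hΨdef
  have hΨm : Measurable Ψ := by
    apply Measurable.ite (measurableSet_lt measurable_snd measurable_fst)
    · exact (hφm.comp measurable_fst).mul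
        (((measurable_const.sub measurable_snd).pow measurable_const).const_mul α)
    · exact measurable_const
  have hmIoo : volume (Set.Ioo (0:ℝ) t) < ⊤ := measure_Ioo_lt_top
  -- sections in the second variable
  have hsec : ∀ s ∈ Set.Ioo (0:ℝ) t, Integrable (fun x => Ψ (s, x)) ν := by
    intro s hs
    have hb : ∀ x, ‖Ψ (s, x)‖ ≤ |φ s| * (α * (t - s) ^ (-α - 1)) := by
      intro x
      by_cases h : x < s
      · simp only [hΨdef, if_pos h, norm_mul, Real.norm_eq_abs]
        refine mul_le_mul_of_nonneg_left ?_ (abs_nonneg _)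
        rw [abs_of_nonneg hα.le,
          abs_of_nonneg (Real.rpow_nonneg (by linarith [h.trans hs.2] : (0:ℝ) ≤ t - x) _)]
        refine mul_le_mul_of_nonneg_left ?_ hα.le
        exact Real.rpow_le_rpow_of_nonpos (by linarith [hs.2]) (by linarith) (by linarith)
      · simp only [hΨdef, if_neg h]
        simp only [norm_zero]
        exact mul_nonneg (abs_nonneg _) (hFpos s hs.2)
    refine Integrable.mono' (g := fun _ => |φ s| * (α * (t - s) ^ (-α - 1))) ?_ ?_
      (Filter.Eventually.of_forall hb)
    · exact integrableOn_const hmIoo.ne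
    · exact (hΨm.comp (measurable_const.prodMk measurable_id)).aestronglyMeasurable
  have hrestr : ∀ s ∈ Set.Ioo (0:ℝ) t, ν.restrict (Set.Iio s) = volume.restrict (Set.Ioo 0 s) := by
    intro s hs
    rw [hν, Measure.restrict_restrict measurableSet_Iio]
    congr 1
    ext x
    constructor
    · rintro ⟨hx1, hx2, hx3⟩; exact ⟨hx2, hx1⟩
    · rintro ⟨hx1, hx2⟩; exact ⟨hx2, hx1, hx2.trans hs.2⟩
  have hrestr2 : ∀ x ∈ Set.Ioo (0:ℝ) t, ν.restrict (Set.Ioi x) = volume.restrict (Set.Ioo x t) := by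
    intro x hx
    rw [hν, Measure.restrict_restrict measurableSet_Ioi]
    congr 1
    ext s
    constructor
    · rintro ⟨hs1, hs2, hs3⟩; exact ⟨hs1, hs3⟩
    · rintro ⟨hs1, hs2⟩; exact ⟨hs1, hx.1.trans hs1, hs2⟩
  have hinner : ∀ s ∈ Set.Ioo (0:ℝ) t,
      (∫ x, Ψ (s, x) ∂ν) = φ s * ∫ x in Set.Ioo 0 s, α * (t - x) ^ (-α - 1) := by
    intro s hs
    have e1 : (fun x => Ψ (s, x))
        = fun x => (Set.Iio s).indicator (fun x => φ s * (α * (t - x) ^ (-α - 1))) x := by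
      funext x
      simp [hΨdef, Set.indicator_apply, Set.mem_Iio]
    rw [e1, integral_indicator measurableSet_Iio, hrestr s hs, integral_const_mul]
  have hinner2 : ∀ x ∈ Set.Ioo (0:ℝ) t,
      (∫ s, Ψ (s, x) ∂ν) = (α * (t - x) ^ (-α - 1)) * (- H x) := by
    intro x hx
    have e1 : (fun s => Ψ (s, x))
        = fun s => (Set.Ioi x).indicator (fun s => φ s * (α * (t - x) ^ (-α - 1))) s := by
      funext s
      simp [hΨdef, Set.indicator_apply, Set.mem_Ioi]
    rw [e1, integral_indicator measurableSet_Ioi, hrestr2 x hx, integral_mul_const,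
      hH x ⟨hx.1.le, hx.2⟩, mul_comm]
  have hnormeq : ∀ s ∈ Set.Ioo (0:ℝ) t,
      (∫ x, ‖Ψ (s, x)‖ ∂ν) = |φ s| * ((t - s) ^ (-α) - t ^ (-α)) := by
    intro s hs
    have e1 : (fun x => ‖Ψ (s, x)‖)
        = fun x => (Set.Iio s).indicator (fun x => |φ s| * (α * (t - x) ^ (-α - 1))) x := by
      funext x
      by_cases h : x < s
      · simp only [hΨdef, if_pos h, Set.indicator_apply, Set.mem_Iio, if_pos h,
          Real.norm_eq_abs, abs_mul]
        rw [abs_of_nonneg hα.le,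
          abs_of_nonneg (Real.rpow_nonneg (by linarith [h.trans hs.2] : (0:ℝ) ≤ t - x) _)]
      · simp [hΨdef, if_neg h, Set.indicator_apply, Set.mem_Iio, h]
    rw [e1, integral_indicator measurableSet_Iio, hrestr s hs, integral_const_mul,
      hFTC s hs]
  have hnormint : Integrable (fun s => ∫ x, ‖Ψ (s, x)‖ ∂ν) ν := by
    refine Integrable.mono' hφF.norm ?_ ?_
    · exact (hΨm.norm.stronglyMeasurable.integral_prod_right').aestronglyMeasurable
    · refine ae_restrict_of_forall_mem measurableSet_Ioo (fun s hs => ?_)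
      have h1 : (0:ℝ) ≤ ∫ x, ‖Ψ (s, x)‖ ∂ν :=
        integral_nonneg (fun x => norm_nonneg _)
      rw [Real.norm_eq_abs, abs_of_nonneg h1, hnormeq s hs]
      have h2 : (0:ℝ) ≤ t ^ (-α) := Real.rpow_nonneg ht.le _
      have h3 : (0:ℝ) ≤ (t - s) ^ (-α) := Real.rpow_nonneg (by linarith [hs.2]) _
      rw [norm_mul, Real.norm_eq_abs, Real.norm_eq_abs, abs_of_nonneg h3]
      have := abs_nonneg (φ s)
      nlinarith
  have hΨi : Integrable Ψ (ν.prod ν) := by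
    rw [integrable_prod_iff hΨm.aestronglyMeasurable]
    constructor
    · exact ae_restrict_of_forall_mem measurableSet_Ioo (fun s hs => hsec s hs)
    · exact hnormint
  have hI1 : Integrable (fun s => ∫ x, Ψ (s, x) ∂ν) ν := hΨi.integral_prod_left
  have hsplit : (∫ s in Set.Ioo 0 t, φ s * (t - s) ^ (-α))
      = (∫ s, φ s * t ^ (-α) ∂ν) + ∫ s, (∫ x, Ψ (s, x) ∂ν) ∂ν := by
    rw [← integral_add (hφi.mul_const _) hI1]
    refine setIntegral_congr_fun measurableSet_Ioo (fun s hs => ?_)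
    rw [hinner s hs, hFTC s hs]
    ring
  have hpart1 : (∫ s, φ s * t ^ (-α) ∂ν) ≤ 0 := by
    rw [integral_mul_const]
    have := hH 0 ⟨le_refl 0, ht⟩
    rw [hν]
    rw [show (∫ s in Set.Ioo (0:ℝ) t, φ s) = - H 0 from this]
    have h2 : (0:ℝ) ≤ t ^ (-α) := Real.rpow_nonneg ht.le _
    have h3 : 0 ≤ H 0 := hH0 0 ⟨le_refl 0, ht⟩
    nlinarith
  have hpart2 : (∫ s, (∫ x, Ψ (s, x) ∂ν) ∂ν) ≤ 0 := by
    rw [integral_integral_swap (f := fun s x => Ψ (s, x)) hΨi]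
    refine integral_nonpos_of_ae ?_
    refine ae_restrict_of_forall_mem measurableSet_Ioo (fun x hx => ?_)
    show (∫ s, Ψ (s, x) ∂ν) ≤ 0
    rw [hinner2 x hx]
    have h1 : 0 ≤ α * (t - x) ^ (-α - 1) := hFpos x hx.2
    have h2 : 0 ≤ H x := hH0 x ⟨hx.1.le, hx.2⟩
    nlinarith
  calc (∫ s in Set.Ioo 0 t, φ s * (t - s) ^ (-α))
      = (∫ s, φ s * t ^ (-α) ∂ν) + ∫ s, (∫ x, Ψ (s, x) ∂ν) ∂ν := hsplit
    _ ≤ 0 := by linarith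

/-- Lemma 2.1 / Alikhanov's inequality: for `0 < α < 1` and `v` absolutely
continuous on `[0,T]`, `v(t) ∂_t^α v(t) ≥ (1/2) ∂_t^α (v²)(t)` for all `t ∈ (0,T]`. -/
theorem caputo_sq_inequality
    (α T : ℝ) (hα : 0 < α) (hα1 : α < 1) (hT : 0 < T)
    (v : ℝ → ℝ) (hv : AbsCont v T) :
    ∀ t, 0 < t → t ≤ T →
      (1 / 2) * caputo α (fun s => v s ^ 2) t ≤ v t * caputo α v t := by
  obtain ⟨hint, hftc⟩ := hv
  intro t ht htT
  set g : ℝ → ℝ := deriv v with hg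
  have hgm : Measurable g := measurable_deriv v
  set gI : ℝ → ℝ := (Set.Icc (0:ℝ) T).indicator g with hgIdef
  have hgIm : Measurable gI := hgm.indicator measurableSet_Icc
  have hgIi : Integrable gI := hint.integrable_indicator measurableSet_Icc
  set P : ℝ → ℝ := fun x => v 0 + ∫ y in (0:ℝ)..x, gI y with hPdef
  have hPc : Continuous P := continuous_const.add (hgIi.continuous_primitive 0)
  have hPveq : ∀ x ∈ Set.Icc (0:ℝ) T, P x = v x := by
    intro x hx
    rw [hftc x hx, hPdef]
    simp only [add_right_inj]
    refine intervalIntegral.integral_congr (fun y hy => ?_)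
    rw [Set.uIcc_of_le hx.1] at hy
    rw [hgIdef]
    exact Set.indicator_of_mem (Set.mem_Icc.2 ⟨hy.1, hy.2.trans hx.2⟩) g
  -- a.e. differentiability of v on (0, T)
  have hae : ∀ᵐ x, x ∈ Set.Ioo (0:ℝ) T → DifferentiableAt ℝ v x := by
    set Gp : ℝ → ℝ := fun x => ∫ y in (0:ℝ)..x, max (gI y) 0 with hGp
    set Gm : ℝ → ℝ := fun x => ∫ y in (0:ℝ)..x, max (-gI y) 0 with hGm
    have hip : Integrable (fun y => max (gI y) 0) := hgIi.pos_part
    have him : Integrable (fun y => max (-gI y) 0) := hgIi.neg_part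
    have hmono : ∀ (h : ℝ → ℝ), Integrable h → (∀ y, 0 ≤ h y) →
        Monotone fun x => ∫ y in (0:ℝ)..x, h y := by
      intro h hi hnn a b hab
      have : (∫ y in (0:ℝ)..b, h y) - ∫ y in (0:ℝ)..a, h y = ∫ y in a..b, h y :=
        intervalIntegral.integral_interval_sub_left hi.intervalIntegrable
          hi.intervalIntegrable
      have h2 : 0 ≤ ∫ y in a..b, h y :=
        intervalIntegral.integral_nonneg hab (fun u _ => hnn u)
      simp only
      linarith
    have h1 := (hmono _ hip (fun y => le_max_right _ _)).ae_differentiableAt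
    have h2 := (hmono _ him (fun y => le_max_right _ _)).ae_differentiableAt
    filter_upwards [h1, h2] with x hx1 hx2 hx
    have hveq : v =ᶠ[nhds x] fun y => v 0 + (Gp y - Gm y) := by
      refine Filter.eventually_of_mem (isOpen_Ioo.mem_nhds hx) (fun y hy => ?_)
      have : v y = P y := (hPveq y ⟨hy.1.le, hy.2.le⟩).symm
      rw [this, hPdef, hGp, hGm]
      simp only [add_right_inj]
      rw [← intervalIntegral.integral_sub hip.intervalIntegrable him.intervalIntegrable]
      refine intervalIntegral.integral_congr (fun z _ => ?_)
      exact (max_zero_sub_max_neg_zero_eq_self (gI z)).symm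
    rw [hveq.differentiableAt_iff]
    exact (differentiableAt_const _).add (hx1.sub hx2)
  -- segment integral of the derivative
  have hii : ∀ a b : ℝ, 0 ≤ a → b ≤ T → a ≤ b → IntervalIntegrable g volume a b := by
    intro a b ha hb hab
    rw [intervalIntegrable_iff_integrableOn_Ioc_of_le hab]
    exact hint.mono_set (fun x hx => ⟨ha.trans hx.1.le, hx.2.trans hb⟩)
  have hseg : ∀ u w : ℝ, 0 ≤ u → u ≤ w → w ≤ T →
      (∫ s in Set.Ioo u w, g s) = v w - v u := by
    intro u w hu huw hwT
    rw [← integral_Ioc_eq_integral_Ioo, ← intervalIntegral.integral_of_le huw]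
    rw [← intervalIntegral.integral_interval_sub_left
      (hii 0 w (le_refl 0) hwT (hu.trans huw)) (hii 0 u (le_refl 0) (huw.trans hwT) hu)]
    rw [hftc w ⟨hu.trans huw, hwT⟩, hftc u ⟨hu, huw.trans hwT⟩]
    ring
  -- basic facts
  have hIooIcc : Set.Ioo (0:ℝ) t ⊆ Set.Icc 0 T := fun x hx => ⟨hx.1.le, hx.2.le.trans htT⟩
  have hgIoo : IntegrableOn g (Set.Ioo 0 t) := hint.mono_set hIooIcc
  have hFm : Measurable (fun s : ℝ => (t - s) ^ (-α)) :=
    (measurable_const.sub measurable_id).pow measurable_const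
  have hPnorm : ∀ x : ℝ, ‖P x‖ ≤ ‖v 0‖ + ∫ y, ‖gI y‖ := by
    intro x
    have h0 : ‖∫ y in (0:ℝ)..x, gI y‖ ≤ ∫ y, ‖gI y‖ :=
      (intervalIntegral.norm_integral_le_integral_norm_uIoc).trans
        (setIntegral_le_integral hgIi.norm (Filter.Eventually.of_forall fun y => norm_nonneg _))
    calc ‖P x‖ ≤ ‖v 0‖ + ‖∫ y in (0:ℝ)..x, gI y‖ := norm_add_le _ _
      _ ≤ ‖v 0‖ + ∫ y, ‖gI y‖ := by linarith
  have hPb : ∀ c : ℝ, ∃ C, ∀ x, ‖2 * (P x - c)‖ ≤ C := by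
    intro c
    refine ⟨2 * ((‖v 0‖ + ∫ y, ‖gI y‖) + ‖c‖), fun x => ?_⟩
    have h1 := hPnorm x
    have h2 : ‖P x - c‖ ≤ ‖P x‖ + ‖c‖ := norm_sub_le _ _
    rw [norm_mul]
    simp only [Real.norm_ofNat]
    nlinarith [norm_nonneg (P x - c)]
  set φ : ℝ → ℝ := fun s => 2 * (P s - v t) * g s with hφdef
  have hφm : Measurable φ := (((hPc.measurable).sub measurable_const).const_mul 2).mul hgm
  have hφi : IntegrableOn φ (Set.Ioo 0 t) :=
    (hPb (v t)).elim fun C hC => Integrable.bdd_mul hgIoo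
      (continuous_const.mul (hPc.sub continuous_const)).aestronglyMeasurable (Filter.Eventually.of_forall hC)
  -- value of the tail integrals of φ
  have hHval : ∀ u ∈ Set.Ico (0:ℝ) t, (∫ s in Set.Ioo u t, φ s) = -((v t - v u)^2) := by
    intro u hu
    have huT : u ∈ Set.Icc (0:ℝ) T := ⟨hu.1, hu.2.le.trans htT⟩
    have hPu : P u = v u := hPveq u huT
    have hgu : IntegrableOn g (Set.Ioo u t) := hint.mono_set
      (fun x hx => ⟨hu.1.trans hx.1.le, hx.2.le.trans htT⟩)
    have hPs : ∀ s ∈ Set.Ioo u t, P s - P u = ∫ x in Set.Ioo u s, g x := by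
      intro s hs
      have e : (∫ y in (0:ℝ)..s, gI y) - ∫ y in (0:ℝ)..u, gI y = ∫ y in u..s, gI y :=
        intervalIntegral.integral_interval_sub_left hgIi.intervalIntegrable
          hgIi.intervalIntegrable
      have e2 : (∫ y in u..s, gI y) = ∫ y in u..s, g y := by
        refine intervalIntegral.integral_congr (fun y hy => ?_)
        rw [Set.uIcc_of_le hs.1.le] at hy
        rw [hgIdef]
        exact Set.indicator_of_mem
          (Set.mem_Icc.2 ⟨hu.1.trans hy.1, (hy.2.trans hs.2.le).trans htT⟩) g
      rw [hPdef]
      simp only [add_sub_add_left_eq_sub]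
      rw [e, e2, intervalIntegral.integral_of_le hs.1.le, integral_Ioc_eq_integral_Ioo]
    have hb2 : ∃ C, ∀ x, ‖(P x - P u) * 2‖ ≤ C := by
      obtain ⟨C, hC⟩ := hPb (P u)
      exact ⟨C, fun x => by rw [mul_comm]; exact hC x⟩
    have hi1 : IntegrableOn (fun s => (P s - P u) * 2 * g s) (Set.Ioo u t) :=
      hb2.elim fun C hC => Integrable.bdd_mul hgu
        ((hPc.sub continuous_const).mul continuous_const).aestronglyMeasurable (Filter.Eventually.of_forall hC)
    have hi2 : IntegrableOn (fun s => (2 * (v u - v t)) * g s) (Set.Ioo u t) :=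
      hgu.const_mul _
    have e1 : (∫ s in Set.Ioo u t, φ s)
        = ∫ s in Set.Ioo u t, ((P s - P u) * 2 * g s + (2 * (v u - v t)) * g s) := by
      refine setIntegral_congr_fun measurableSet_Ioo (fun s hs => ?_)
      simp only [hφdef]
      rw [hPu]
      ring
    have e2 : (∫ s in Set.Ioo u t, (P s - P u) * 2 * g s)
        = (v t - v u) ^ 2 := by
      have e2a : (∫ s in Set.Ioo u t, (P s - P u) * 2 * g s)
          = ∫ s in Set.Ioo u t, (g s * (∫ x in Set.Ioo u s, g x)) * 2 := by
        refine setIntegral_congr_fun measurableSet_Ioo (fun s hs => ?_)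
        rw [← hPs s hs]
        ring
      rw [e2a, integral_mul_const, sq_trick hgm hu.2 hgu,
        hseg u t hu.1 hu.2.le htT]
      ring
    rw [e1, integral_add hi1 hi2, e2, integral_const_mul, hseg u t hu.1 hu.2.le htT]
    ring
  -- a.e. formula for the derivative of v²
  have hderivsq : ∀ᵐ s, s ∈ Set.Ioo (0:ℝ) t →
      deriv (fun x => v x ^ 2) s = 2 * v s * g s := by
    filter_upwards [hae] with s hs hst
    have hsT : s ∈ Set.Ioo (0:ℝ) T := ⟨hst.1, hst.2.trans_le htT⟩
    have hd := hs hsT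
    have h2 : HasDerivAt (fun x => v x ^ 2) ((2:ℕ) * v s ^ (2-1) * deriv v s) s :=
      hd.hasDerivAt.pow 2
    rw [h2.deriv, hg]
    push_cast
    ring
  have KEY : (1/2) * (∫ s in Set.Ioo (0:ℝ) t, deriv (fun s => v s ^ 2) s * (t - s) ^ (-α))
      ≤ v t * ∫ s in Set.Ioo (0:ℝ) t, g s * (t - s) ^ (-α) := by
    by_cases hA : IntegrableOn (fun s => g s * (t - s) ^ (-α)) (Set.Ioo 0 t)
    · -- main (integrable) case
      have hφF : IntegrableOn (fun s => φ s * (t - s) ^ (-α)) (Set.Ioo 0 t) := by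
        have e : (fun s => φ s * (t - s) ^ (-α))
            = fun s => (2 * (P s - v t)) * (g s * (t - s) ^ (-α)) := by
          funext s; simp only [hφdef]; ring
        rw [e]
        obtain ⟨C, hC⟩ := hPb (v t)
        exact Integrable.bdd_mul hA
          (continuous_const.mul (hPc.sub continuous_const)).aestronglyMeasurable (Filter.Eventually.of_forall hC)
      have hcore := core_ineq α t hα ht φ (fun u => (v t - v u)^2) hφm hφi hφF hHval
        (fun u _ => sq_nonneg _)
      have h2Pg : IntegrableOn (fun s => (2 * P s) * (g s * (t - s) ^ (-α)))
          (Set.Ioo 0 t) := by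
        refine Integrable.bdd_mul hA (continuous_const.mul hPc).aestronglyMeasurable
          (c := 2 * (‖v 0‖ + ∫ y, ‖gI y‖)) (Filter.Eventually.of_forall fun x => ?_)
        rw [norm_mul]
        simp only [Real.norm_ofNat]
        have := hPnorm x
        nlinarith [norm_nonneg (P x)]
      have hI2 : (∫ s in Set.Ioo (0:ℝ) t, deriv (fun s => v s ^ 2) s * (t - s) ^ (-α))
          = ∫ s in Set.Ioo (0:ℝ) t, (2 * P s) * (g s * (t - s) ^ (-α)) := by
        refine integral_congr_ae ?_
        filter_upwards [ae_restrict_mem measurableSet_Ioo, ae_restrict_of_ae hderivsq]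
          with s hs hds
        rw [hds hs, hPveq s (hIooIcc hs)]
        ring
      have hsub : (∫ s in Set.Ioo (0:ℝ) t, φ s * (t - s) ^ (-α))
          = (∫ s in Set.Ioo (0:ℝ) t, (2 * P s) * (g s * (t - s) ^ (-α)))
            - (2 * v t) * ∫ s in Set.Ioo (0:ℝ) t, g s * (t - s) ^ (-α) := by
        rw [← integral_const_mul, ← integral_sub h2Pg (hA.const_mul _)]
        refine setIntegral_congr_fun measurableSet_Ioo (fun s hs => ?_)
        simp only [hφdef]; ring
      rw [hI2]
      linarith [hcore, hsub.symm]
    · -- non-integrable case : the first Caputo integral vanishes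
      have hI1 : (∫ s in Set.Ioo (0:ℝ) t, g s * (t - s) ^ (-α)) = 0 := integral_undef hA
      rw [hI1, mul_zero]
      by_cases hB : IntegrableOn
          (fun s => deriv (fun s => v s ^ 2) s * (t - s) ^ (-α)) (Set.Ioo 0 t)
      · -- then necessarily v t = 0
        have hvt : v t = 0 := by
          by_contra hne
          apply hA
          have hPt : P t = v t := hPveq t ⟨ht.le, htT⟩
          have hcont : ContinuousAt (fun x => |P x|) t := hPc.abs.continuousAt
          have hpos : 0 < |v t| / 2 := by positivity
          obtain ⟨δ, hδ, hball⟩ := Metric.continuousAt_iff.1 hcont (|v t|/2) hpos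
          set r : ℝ := max (t - δ/2) (t/2) with hr
          have hr0 : 0 < r := lt_of_lt_of_le (by linarith) (le_max_right _ _)
          have hrt : r < t := max_lt (by linarith) (by linarith)
          have hlow : ∀ s, r ≤ s → s < t → |v t| / 2 ≤ |P s| := by
            intro s h1 h2
            have hge : t - δ/2 ≤ s := le_trans (le_max_left _ _) h1
            have hd : dist s t < δ := by
              rw [Real.dist_eq, abs_lt]
              constructor <;> linarith
            have hb2 := hball hd
            rw [Real.dist_eq, hPt] at hb2
            have habs := abs_lt.1 hb2
            have := abs_abs (P s)
            linarith [habs.1, le_abs_self (|P s| - |v t|), neg_abs_le (|P s| - |v t|)]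
          have hu : Set.Ioo (0:ℝ) t ⊆ Set.Ioo 0 r ∪ Set.Ico r t := by
            intro x hx
            by_cases h : x < r
            · exact Or.inl ⟨hx.1, h⟩
            · exact Or.inr ⟨not_lt.1 h, hx.2⟩
          refine IntegrableOn.mono_set (IntegrableOn.union ?_ ?_) hu
          · refine Integrable.mono'
              (g := fun s => ‖g s‖ * (t - r) ^ (-α))
              ((hint.mono_set
                (fun x hx => ⟨hx.1.le, (hx.2.trans hrt).le.trans htT⟩)).norm.mul_const _)
              ((hgm.mul hFm).aestronglyMeasurable) ?_
            refine ae_restrict_of_forall_mem measurableSet_Ioo (fun s hs => ?_)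
            rw [norm_mul]
            refine mul_le_mul_of_nonneg_left ?_ (norm_nonneg _)
            rw [Real.norm_eq_abs, abs_of_nonneg (Real.rpow_nonneg (by linarith [hs.2]) _)]
            exact Real.rpow_le_rpow_of_nonpos (by linarith) (by linarith [hs.2]) (by linarith)
          · refine Integrable.mono'
              (g := fun s => |v t|⁻¹ * ‖deriv (fun s => v s ^ 2) s * (t - s) ^ (-α)‖)
              ((hB.mono_set (fun x hx => ⟨hr0.trans_le hx.1, hx.2⟩)).norm.const_mul _)
              ((hgm.mul hFm).aestronglyMeasurable) ?_
            filter_upwards [ae_restrict_mem measurableSet_Ico, ae_restrict_of_ae hderivsq]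
              with s hs hds
            have hsIoo : s ∈ Set.Ioo (0:ℝ) t := ⟨hr0.trans_le hs.1, hs.2⟩
            rw [hds hsIoo]
            have hvP : v s = P s := (hPveq s (hIooIcc hsIoo)).symm
            have hlb := hlow s hs.1 hs.2
            have hvtpos : 0 < |v t| := abs_pos.2 hne
            have hfac : 1 ≤ |v t|⁻¹ * (2 * |P s|) := by
              rw [← inv_mul_cancel₀ hvtpos.ne']
              exact mul_le_mul_of_nonneg_left (by linarith) (inv_nonneg.2 hvtpos.le)
            rw [hvP]
            have e : ‖2 * P s * g s * (t - s) ^ (-α)‖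
                = 2 * |P s| * ‖g s * (t - s) ^ (-α)‖ := by
              simp only [Real.norm_eq_abs, abs_mul, abs_two]
              ring
            rw [e]
            calc ‖g s * (t - s) ^ (-α)‖ = 1 * ‖g s * (t - s) ^ (-α)‖ := (one_mul _).symm
              _ ≤ (|v t|⁻¹ * (2 * |P s|)) * ‖g s * (t - s) ^ (-α)‖ :=
                  mul_le_mul_of_nonneg_right hfac (norm_nonneg _)
              _ = |v t|⁻¹ * (2 * |P s| * ‖g s * (t - s) ^ (-α)‖) := by ring
        -- with v t = 0 the remaining integral is nonpositive
        have hI2form : (∫ s in Set.Ioo (0:ℝ) t, deriv (fun s => v s ^ 2) s * (t - s) ^ (-α))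
            = ∫ s in Set.Ioo (0:ℝ) t, φ s * (t - s) ^ (-α) := by
          refine integral_congr_ae ?_
          filter_upwards [ae_restrict_mem measurableSet_Ioo, ae_restrict_of_ae hderivsq]
            with s hs hds
          rw [hds hs]
          simp only [hφdef]
          rw [← hPveq s (hIooIcc hs), hvt]
          ring
        have hφF : IntegrableOn (fun s => φ s * (t - s) ^ (-α)) (Set.Ioo 0 t) := by
          refine hB.congr ?_
          refine Filter.EventuallyEq.symm ?_
          filter_upwards [ae_restrict_mem measurableSet_Ioo, ae_restrict_of_ae hderivsq]
            with s hs hds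
          rw [hds hs]
          simp only [hφdef]
          rw [← hPveq s (hIooIcc hs), hvt]
          ring
        have hcore := core_ineq α t hα ht φ (fun u => (v t - v u)^2) hφm hφi hφF hHval
          (fun u _ => sq_nonneg _)
        rw [hI2form]
        linarith
      · have hI2 : (∫ s in Set.Ioo (0:ℝ) t,
            deriv (fun s => v s ^ 2) s * (t - s) ^ (-α)) = 0 := integral_undef hB
        rw [hI2]
        norm_num
  unfold caputo
  rw [← hg]
  have hΓ : 0 < Real.Gamma (1 - α) := Real.Gamma_pos_of_pos (by linarith)
  have hc : 0 < 1 / Real.Gamma (1 - α) := by positivity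
  calc (1/2) * ((1 / Real.Gamma (1 - α)) *
        ∫ s in Set.Ioo (0:ℝ) t, deriv (fun s => v s ^ 2) s * (t - s) ^ (-α))
      = (1 / Real.Gamma (1 - α)) * ((1/2) *
        ∫ s in Set.Ioo (0:ℝ) t, deriv (fun s => v s ^ 2) s * (t - s) ^ (-α)) := by ring
    _ ≤ (1 / Real.Gamma (1 - α)) *
        (v t * ∫ s in Set.Ioo (0:ℝ) t, g s * (t - s) ^ (-α)) :=
        mul_le_mul_of_nonneg_left KEY hc.le
    _ = v t * ((1 / Real.Gamma (1 - α)) *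
        ∫ s in Set.Ioo (0:ℝ) t, g s * (t - s) ^ (-α)) := by ring
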